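/- Let τ ≥ 0 and let S_n, S_a, I, R : [0,∞) → ℝ and M : [−τ,∞) → ℝ be continuous functions, differentiable on (0,∞), satisfying for all t > 0 the equations of system (2): S_n' = (b − v_i)N − βIS_n/N − ηM(t−τ)S_n + λS_a + δqR − bS_n; S_a' = −σ_sβIS_a/N + ηM(t−τ)S_n − (λ + v_s + b)S_a + δpR; I' = βIS_n/N + σ_sβIS_a/N − (r + b)I; R' = rI + v_iN + v_sS_a − (δ + b)R; M' = ω_o + α_oI + αS_a/N − λ_oM. Assume S_n(0) ≥ 0, S_a(0) ≥ 0, I(0) > 0, R(0) ≥ 0, M(s) ≥ 0 for all s ∈ [−τ, 0], and S_n(0) + S_a(0) + I(0) + R(0) = N. Then for all t ≥ 0: 0 ≤ S_n(t) ≤ N, 0 ≤ S_a(t) ≤ N, 0 ≤ I(t) ≤ N, 0 ≤ R(t) ≤ N, and 0 ≤ M(t) ≤ M̂, where M̂ = M(0) + (ω_o + α_oN + α)/λ_o. -/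

import Mathlib

open Set

open Filter Topology in
private lemma prod_ge_aux {x y E B : ℝ} (hx : -E ≤ x) (hy : -E ≤ y) (hxB : x ≤ B) (hyB : y ≤ B)
    (hB : 0 ≤ B) (hE : 0 ≤ E) : -(E*B) ≤ x*y := by
  rcases le_or_gt 0 x with h | h
  · rcases le_or_gt 0 y with h' | h'
    · nlinarith
    · nlinarith
  · nlinarith

open Filter Topology in
private lemma no_first_zero {g : ℝ → ℝ} {t0 d : ℝ} (ht0 : 0 < t0) (hg : HasDerivAt g d t0)
    (hg0 : g t0 = 0) (hpos : ∀ s, 0 < s → s < t0 → 0 < g s) (hd : 0 < d) : False := by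
  have hslope := hasDerivAt_iff_tendsto_slope.1 hg
  have h1 : Tendsto (slope g t0) (𝓝[<] t0) (𝓝 d) :=
    hslope.mono_left (nhdsWithin_mono _ (fun x hx => ne_of_lt hx))
  have h2 : ∀ᶠ s in 𝓝[<] t0, 0 < slope g t0 s := h1.eventually (eventually_gt_nhds hd)
  have h3 : ∀ᶠ s in 𝓝[<] t0, 0 < s := eventually_nhdsWithin_of_eventually_nhds
    (eventually_gt_nhds ht0)
  rcases (h2.and (h3.and self_mem_nhdsWithin)).exists with ⟨s, hs1, hs2, hs3⟩
  have hgs := hpos s hs2 hs3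
  have : slope g t0 s = g s / (s - t0) := by
    simp [slope_def_field, hg0]
  rw [this] at hs1
  have : g s / (s - t0) < 0 := div_neg_of_pos_of_neg hgs (by linarith [hs3])
  linarith

private lemma case_helper {X : ℝ → ℝ} {t0 E K ε dX : ℝ} (ht0 : 0 < t0)
    (hX' : HasDerivAt X dX t0) (hXeq : X t0 = -E)
    (hEdef : E = ε * Real.exp (K * t0))
    (hpos : ∀ s, 0 < s → s < t0 → 0 < X s + ε * Real.exp (K * s))
    (hd : -(K * E) < dX) : False := by
  have hexp : HasDerivAt (fun s => ε * Real.exp (K * s)) (ε * K * Real.exp (K * t0)) t0 := by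
    have := (((hasDerivAt_id t0).const_mul K).exp).const_mul ε
    simpa [mul_comm, mul_assoc, mul_left_comm] using this
  have hg : HasDerivAt (fun s => X s + ε * Real.exp (K * s))
      (dX + ε * K * Real.exp (K * t0)) t0 := hX'.add hexp
  refine no_first_zero ht0 hg ?_ hpos ?_
  · simp [hXeq, hEdef]
  · have : ε * K * Real.exp (K * t0) = K * E := by rw [hEdef]; ring
    linarith [this]

private lemma le_init_of_deriv_nonpos {f : ℝ → ℝ} {t : ℝ} (ht : 0 ≤ t)
    (hc : ContinuousOn f (Icc 0 t))
    (hd : ∀ s, 0 < s → s < t → ∃ d, HasDerivAt f d s ∧ d ≤ 0) : f t ≤ f 0 := by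
  have h := antitoneOn_of_deriv_nonpos (convex_Icc 0 t) hc ?_ ?_
  · exact h (left_mem_Icc.2 ht) (right_mem_Icc.2 ht) ht
  · intro x hx
    rw [interior_Icc] at hx
    obtain ⟨d, hdd, _⟩ := hd x hx.1 hx.2
    exact hdd.differentiableAt.differentiableWithinAt
  · intro x hx
    rw [interior_Icc] at hx
    obtain ⟨d, hdd, hdle⟩ := hd x hx.1 hx.2
    rw [hdd.deriv]; exact hdle
set_option maxHeartbeats 1000000 in
/-- Positivity and boundedness of solutions of the vaccination-awareness model (2)
(Theorem 1 of the paper). -/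
theorem positivity_and_boundedness_of_solutions
    (b beta r eta lam lamo alpha alphao omegao delta vs N sigmas p q vi tau : ℝ)
    (hb : 0 < b) (hbeta : 0 < beta) (hr : 0 < r) (heta : 0 < eta)
    (hlam : 0 < lam) (hlamo : 0 < lamo) (halpha : 0 < alpha)
    (halphao : 0 < alphao) (homegao : 0 < omegao) (hdelta : 0 < delta)
    (hvs : 0 < vs) (hN : 0 < N)
    (hsigmas0 : 0 < sigmas) (hsigmas1 : sigmas < 1)
    (hp0 : 0 ≤ p) (hp1 : p ≤ 1) (hq : q = 1 - p)
    (hvi0 : 0 < vi) (hvib : vi < b) (htau : 0 ≤ tau)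
    (Sn Sa I R M : ℝ → ℝ)
    (hSnC : ContinuousOn Sn (Ici 0)) (hSaC : ContinuousOn Sa (Ici 0))
    (hIC : ContinuousOn I (Ici 0)) (hRC : ContinuousOn R (Ici 0))
    (hMC : ContinuousOn M (Ici (-tau)))
    (hSn' : ∀ t > (0 : ℝ), HasDerivAt Sn
      ((b - vi) * N - beta * I t * Sn t / N - eta * M (t - tau) * Sn t
        + lam * Sa t + delta * q * R t - b * Sn t) t)
    (hSa' : ∀ t > (0 : ℝ), HasDerivAt Sa
      (-(sigmas * beta * I t * Sa t / N) + eta * M (t - tau) * Sn t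
        - (lam + vs + b) * Sa t + delta * p * R t) t)
    (hI' : ∀ t > (0 : ℝ), HasDerivAt I
      (beta * I t * Sn t / N + sigmas * beta * I t * Sa t / N - (r + b) * I t) t)
    (hR' : ∀ t > (0 : ℝ), HasDerivAt R
      (r * I t + vi * N + vs * Sa t - (delta + b) * R t) t)
    (hM' : ∀ t > (0 : ℝ), HasDerivAt M
      (omegao + alphao * I t + alpha * Sa t / N - lamo * M t) t)
    (hSn0 : 0 ≤ Sn 0) (hSa0 : 0 ≤ Sa 0) (hI0 : 0 < I 0) (hR0 : 0 ≤ R 0)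
    (hM0 : ∀ s, -tau ≤ s → s ≤ 0 → 0 ≤ M s)
    (hsum : Sn 0 + Sa 0 + I 0 + R 0 = N) :
    ∀ t ≥ (0 : ℝ),
      (0 ≤ Sn t ∧ Sn t ≤ N) ∧ (0 ≤ Sa t ∧ Sa t ≤ N) ∧
      (0 ≤ I t ∧ I t ≤ N) ∧ (0 ≤ R t ∧ R t ≤ N) ∧
      (0 ≤ M t ∧ M t ≤ M 0 + (omegao + alphao * N + alpha) / lamo) := by
  have hq0 : 0 ≤ q := by rw [hq]; linarith only [hp1]
  have hq1 : q ≤ 1 := by rw [hq]; linarith only [hp0]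
  have hM00 : 0 ≤ M 0 := hM0 0 (neg_nonpos.2 htau) le_rfl
  have hexpD : ∀ (c u : ℝ), HasDerivAt (fun z => Real.exp (c * z)) (c * Real.exp (c * u)) u := by
    intro c u
    have h := ((hasDerivAt_id u).const_mul c).exp
    simpa [mul_comm, mul_assoc, mul_left_comm] using h
  intro t ht
  have hcexp : ∀ c : ℝ, Continuous fun s : ℝ => Real.exp (c * s) :=
    fun c => Real.continuous_exp.comp (continuous_const.mul continuous_id)
  have hIccIci : Icc (0:ℝ) t ⊆ Ici (-tau) := fun x hx => le_trans (neg_nonpos.2 htau) hx.1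
  -- bounds on the compact interval
  obtain ⟨BSn, hBSn⟩ := (isCompact_Icc : IsCompact (Icc (0:ℝ) t)).exists_bound_of_continuousOn
    (hSnC.mono Icc_subset_Ici_self)
  obtain ⟨BSa, hBSa⟩ := (isCompact_Icc : IsCompact (Icc (0:ℝ) t)).exists_bound_of_continuousOn
    (hSaC.mono Icc_subset_Ici_self)
  obtain ⟨BI, hBI⟩ := (isCompact_Icc : IsCompact (Icc (0:ℝ) t)).exists_bound_of_continuousOn
    (hIC.mono Icc_subset_Ici_self)
  obtain ⟨BR, hBR⟩ := (isCompact_Icc : IsCompact (Icc (0:ℝ) t)).exists_bound_of_continuousOn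
    (hRC.mono Icc_subset_Ici_self)
  obtain ⟨BM, hBM⟩ := (isCompact_Icc : IsCompact (Icc (-tau) t)).exists_bound_of_continuousOn
    (hMC.mono Icc_subset_Ici_self)
  obtain ⟨B, hBdef⟩ : ∃ x : ℝ, x = 1 + |BSn| + |BSa| + |BI| + |BR| + |BM| := ⟨_, rfl⟩
  have habs1 := abs_nonneg BSn
  have habs2 := abs_nonneg BSa
  have habs3 := abs_nonneg BI
  have habs4 := abs_nonneg BR
  have habs5 := abs_nonneg BM
  have hB1 : (1:ℝ) ≤ B := by rw [hBdef]; linarith only [habs1, habs2, habs3, habs4, habs5]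
  have hB0 : (0:ℝ) < B := lt_of_lt_of_le one_pos hB1
  have hSnB : ∀ s, 0 ≤ s → s ≤ t → -B ≤ Sn s ∧ Sn s ≤ B := by
    intro s h1 h2
    have h := hBSn s ⟨h1, h2⟩
    rw [Real.norm_eq_abs, abs_le] at h
    have h3 := le_abs_self BSn
    exact ⟨by linarith only [hBdef, h.1, h3, habs1, habs2, habs3, habs4, habs5], by linarith only [hBdef, h.2, h3, habs1, habs2, habs3, habs4, habs5]⟩
  have hSaB : ∀ s, 0 ≤ s → s ≤ t → -B ≤ Sa s ∧ Sa s ≤ B := by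
    intro s h1 h2
    have h := hBSa s ⟨h1, h2⟩
    rw [Real.norm_eq_abs, abs_le] at h
    have h3 := le_abs_self BSa
    exact ⟨by linarith only [hBdef, h.1, h3, habs1, habs2, habs3, habs4, habs5], by linarith only [hBdef, h.2, h3, habs1, habs2, habs3, habs4, habs5]⟩
  have hIB : ∀ s, 0 ≤ s → s ≤ t → -B ≤ I s ∧ I s ≤ B := by
    intro s h1 h2
    have h := hBI s ⟨h1, h2⟩
    rw [Real.norm_eq_abs, abs_le] at h
    have h3 := le_abs_self BI
    exact ⟨by linarith only [hBdef, h.1, h3, habs1, habs2, habs3, habs4, habs5], by linarith only [hBdef, h.2, h3, habs1, habs2, habs3, habs4, habs5]⟩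
  have hRB : ∀ s, 0 ≤ s → s ≤ t → -B ≤ R s ∧ R s ≤ B := by
    intro s h1 h2
    have h := hBR s ⟨h1, h2⟩
    rw [Real.norm_eq_abs, abs_le] at h
    have h3 := le_abs_self BR
    exact ⟨by linarith only [hBdef, h.1, h3, habs1, habs2, habs3, habs4, habs5], by linarith only [hBdef, h.2, h3, habs1, habs2, habs3, habs4, habs5]⟩
  have hMB : ∀ s, -tau ≤ s → s ≤ t → -B ≤ M s ∧ M s ≤ B := by
    intro s h1 h2
    have h := hBM s ⟨h1, h2⟩
    rw [Real.norm_eq_abs, abs_le] at h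
    have h3 := le_abs_self BM
    exact ⟨by linarith only [hBdef, h.1, h3, habs1, habs2, habs3, habs4, habs5], by linarith only [hBdef, h.2, h3, habs1, habs2, habs3, habs4, habs5]⟩
  have hQ1 : (0:ℝ) ≤ beta*B/N := div_nonneg (mul_nonneg hbeta.le hB0.le) hN.le
  have hQ2 : (0:ℝ) ≤ eta*B := mul_nonneg heta.le hB0.le
  have hQ3 : (0:ℝ) ≤ sigmas*beta*B/N :=
    div_nonneg (mul_nonneg (mul_nonneg hsigmas0.le hbeta.le) hB0.le) hN.le
  have hQ4 : (0:ℝ) ≤ alpha/N := div_nonneg halpha.le hN.le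
  obtain ⟨K, hKdef⟩ : ∃ x : ℝ, x = 1 + beta*B/N + eta*B + lam + delta + sigmas*beta*B/N
      + eta*B + delta + beta*B/N + sigmas*beta*B/N + r + vs + alphao + alpha/N := ⟨_, rfl⟩
  have hK0 : 0 < K := by rw [hKdef]; linarith only [hQ1, hQ2, hQ3, hQ4, hlam, hdelta, hr, hvs, halphao]
  obtain ⟨Fm, hFmdef⟩ : ∃ F : ℝ → ℝ,
      F = fun s => min (min (min (Sn s) (Sa s)) (min (I s) (R s))) (M s) := ⟨_, rfl⟩
  have hFmSn : ∀ s, Fm s ≤ Sn s := by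
    intro s; simp only [hFmdef]
    exact le_trans (min_le_left _ _) (le_trans (min_le_left _ _) (min_le_left _ _))
  have hFmSa : ∀ s, Fm s ≤ Sa s := by
    intro s; simp only [hFmdef]
    exact le_trans (min_le_left _ _) (le_trans (min_le_left _ _) (min_le_right _ _))
  have hFmI : ∀ s, Fm s ≤ I s := by
    intro s; simp only [hFmdef]
    exact le_trans (min_le_left _ _) (le_trans (min_le_right _ _) (min_le_left _ _))
  have hFmR : ∀ s, Fm s ≤ R s := by
    intro s; simp only [hFmdef]
    exact le_trans (min_le_left _ _) (le_trans (min_le_right _ _) (min_le_right _ _))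
  have hFmM : ∀ s, Fm s ≤ M s := by
    intro s; simp only [hFmdef]; exact min_le_right _ _
  -- main epsilon-claim
  have key : ∀ ε, 0 < ε → ∀ s, 0 ≤ s → s ≤ t → 0 < Fm s + ε * Real.exp (K * s) := by
    intro ε hε
    by_contra hcon
    push_neg at hcon
    obtain ⟨s₀, hs₀1, hs₀2, hs₀3⟩ := hcon
    set S : Set ℝ := Icc 0 t ∩ (fun z => Fm z + ε * Real.exp (K * z)) ⁻¹' (Iic 0) with hSdef
    have hFmC : ContinuousOn Fm (Icc 0 t) := by
      simp only [hFmdef]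
      exact (((hSnC.mono Icc_subset_Ici_self).inf (hSaC.mono Icc_subset_Ici_self)).inf
        ((hIC.mono Icc_subset_Ici_self).inf (hRC.mono Icc_subset_Ici_self))).inf
        (hMC.mono hIccIci)
    have hGC : ContinuousOn (fun z => Fm z + ε * Real.exp (K * z)) (Icc 0 t) :=
      hFmC.add (Continuous.continuousOn (continuous_const.mul (hcexp K)))
    have hScl : IsClosed S := hGC.preimage_isClosed_of_isClosed isClosed_Icc isClosed_Iic
    have hSne : S.Nonempty := ⟨s₀, ⟨hs₀1, hs₀2⟩, hs₀3⟩
    have hSbd : BddBelow S := ⟨0, fun x hx => hx.1.1⟩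
    set t0 := sInf S with ht0def
    have ht0S : t0 ∈ S := hScl.csInf_mem hSne hSbd
    obtain ⟨⟨ht00, ht0t⟩, ht0le'⟩ := ht0S
    have ht0le : Fm t0 + ε * Real.exp (K * t0) ≤ 0 := ht0le'
    have hFm0 : 0 ≤ Fm 0 := by
      simp only [hFmdef]
      exact le_min (le_min (le_min hSn0 hSa0) (le_min hI0.le hR0))
        (hM0 0 (neg_nonpos.2 htau) le_rfl)
    have ht0pos : 0 < t0 := by
      rcases ht00.lt_or_eq with h | h
      · exact h
      · exfalso
        rw [← h, mul_zero, Real.exp_zero, mul_one] at ht0le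
        linarith only [ht0le, hFm0, hε]
    have hlt : ∀ s, 0 ≤ s → s < t0 → 0 < Fm s + ε * Real.exp (K * s) := by
      intro s h1 h2
      by_contra h
      push_neg at h
      have hmem : s ∈ S := ⟨⟨h1, h2.le.trans ht0t⟩, h⟩
      exact absurd (csInf_le hSbd hmem) (not_le.2 h2)
    obtain ⟨E, hEdef⟩ : ∃ x : ℝ, x = ε * Real.exp (K * t0) := ⟨_, rfl⟩
    have hE : 0 < E := by rw [hEdef]; exact mul_pos hε (Real.exp_pos _)
    have ht0le2 : Fm t0 + E ≤ 0 := by rw [hEdef]; exact ht0le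
    have hlim : ∀ (X : ℝ → ℝ), ContinuousAt X t0 → (∀ s, Fm s ≤ X s) → -E ≤ X t0 := by
      intro X hc hge
      have h1 : Filter.Tendsto (fun s => X s + ε * Real.exp (K * s)) (nhdsWithin t0 (Iio t0))
          (nhds (X t0 + E)) := by
        rw [hEdef]
        exact ((hc.add ((continuous_const.mul (hcexp K)).continuousAt)).tendsto).mono_left
          nhdsWithin_le_nhds
      have h2 : ∀ᶠ s in nhdsWithin t0 (Iio t0), 0 ≤ X s + ε * Real.exp (K * s) := by
        filter_upwards [Ioo_mem_nhdsLT_of_mem (⟨ht0pos, le_refl t0⟩ : t0 ∈ Ioc 0 t0)] with s hs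
        have ha := hlt s hs.1.le hs.2
        have hb' := hge s
        linarith only [ha, hb']
      have := ge_of_tendsto h1 h2
      linarith only [this]
    have hSnt0 : -E ≤ Sn t0 := hlim Sn (hSn' t0 ht0pos).differentiableAt.continuousAt hFmSn
    have hSat0 : -E ≤ Sa t0 := hlim Sa (hSa' t0 ht0pos).differentiableAt.continuousAt hFmSa
    have hIt0 : -E ≤ I t0 := hlim I (hI' t0 ht0pos).differentiableAt.continuousAt hFmI
    have hRt0 : -E ≤ R t0 := hlim R (hR' t0 ht0pos).differentiableAt.continuousAt hFmR
    have hMt0 : -E ≤ M t0 := hlim M (hM' t0 ht0pos).differentiableAt.continuousAt hFmM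
    have hMdel : -E ≤ M (t0 - tau) := by
      rcases le_or_gt (t0 - tau) 0 with h | h
      · have := hM0 (t0 - tau) (by linarith only [ht00, htau]) h
        linarith only [this, hE]
      · rcases htau.lt_or_eq with h2 | h2
        · have h3 := hlt (t0 - tau) h.le (by linarith only [h2] : t0 - tau < t0)
          have h4 := hFmM (t0 - tau)
          have h5 : Real.exp (K * (t0 - tau)) ≤ Real.exp (K * t0) :=
            Real.exp_le_exp.2 (by nlinarith only [mul_nonneg hK0.le htau])
          have h6 : ε * Real.exp (K * (t0 - tau)) ≤ E := by
            rw [hEdef]; exact mul_le_mul_of_nonneg_left h5 hε.le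
          linarith only [h3, h4, h6]
        · rw [← h2, sub_zero]; exact hMt0
    obtain ⟨hSnlo, hSnhi⟩ := hSnB t0 ht00 ht0t
    obtain ⟨hSalo, hSahi⟩ := hSaB t0 ht00 ht0t
    obtain ⟨hIlo, hIhi⟩ := hIB t0 ht00 ht0t
    obtain ⟨hRlo, hRhi⟩ := hRB t0 ht00 ht0t
    obtain ⟨hMlo, hMhi⟩ := hMB t0 (le_trans (neg_nonpos.2 htau) ht00) ht0t
    obtain ⟨hMdlo, hMdhi⟩ := hMB (t0 - tau) (by linarith only [ht00] : -tau ≤ t0 - tau) (by linarith only [ht0t, htau] : t0 - tau ≤ t)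
    have hKE : K * E = E + beta*B*E/N + eta*B*E + lam*E + delta*E + sigmas*beta*B*E/N
        + eta*B*E + delta*E + beta*B*E/N + sigmas*beta*B*E/N + r*E + vs*E + alphao*E
        + alpha*E/N := by rw [hKdef]; ring
    have hP1 : (0:ℝ) ≤ beta*B*E/N :=
      div_nonneg (mul_nonneg (mul_nonneg hbeta.le hB0.le) hE.le) hN.le
    have hP2 : (0:ℝ) ≤ eta*B*E := mul_nonneg hQ2 hE.le
    have hP3 : (0:ℝ) ≤ sigmas*beta*B*E/N :=
      div_nonneg (mul_nonneg (mul_nonneg (mul_nonneg hsigmas0.le hbeta.le) hB0.le) hE.le) hN.le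
    have hP4 : (0:ℝ) ≤ alpha*E/N := div_nonneg (mul_nonneg halpha.le hE.le) hN.le
    have hP5 : (0:ℝ) ≤ lam*E := mul_nonneg hlam.le hE.le
    have hP6 : (0:ℝ) ≤ delta*E := mul_nonneg hdelta.le hE.le
    have hP7 : (0:ℝ) ≤ r*E := mul_nonneg hr.le hE.le
    have hP8 : (0:ℝ) ≤ vs*E := mul_nonneg hvs.le hE.le
    have hP9 : (0:ℝ) ≤ alphao*E := mul_nonneg halphao.le hE.le
    have hP10 : (0:ℝ) ≤ b*E := mul_nonneg hb.le hE.le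
    have hmin5 : Fm t0 ≤ -E := by linarith only [ht0le2]
    simp only [hFmdef] at hmin5
    rcases min_le_iff.1 hmin5 with h4' | hcase
    · rcases min_le_iff.1 h4' with h12 | h34
      · rcases min_le_iff.1 h12 with hcase | hcase
        · -- Sn case
          have hXeq : Sn t0 = -E := le_antisymm hcase hSnt0
          refine case_helper ht0pos (hSn' t0 ht0pos) hXeq hEdef ?_ ?_
          · intro s h1 h2
            have ha := hlt s h1.le h2
            have hb' := hFmSn s
            linarith only [ha, hb']
          · rw [hXeq]
            have hA : beta * I t0 * -E / N ≤ beta*B*E/N := by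
              have hnum : beta * I t0 * -E ≤ beta*B*E := by
                nlinarith only [mul_le_mul_of_nonneg_left hIlo (mul_nonneg hbeta.le hE.le)]
              gcongr
            have hA2 : eta * M (t0 - tau) * -E ≤ eta*B*E := by
              nlinarith only [mul_le_mul_of_nonneg_left hMdlo (mul_nonneg heta.le hE.le)]
            have hA3 : -(lam*E) ≤ lam * Sa t0 := by
              nlinarith only [mul_le_mul_of_nonneg_left hSat0 hlam.le]
            have hA4 : -(delta*E) ≤ delta * q * R t0 := by
              nlinarith only [mul_le_mul_of_nonneg_left hRt0 (mul_nonneg hdelta.le hq0),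
                mul_le_mul_of_nonneg_right hq1 (mul_nonneg hdelta.le hE.le)]
            have hA5 : 0 < (b - vi)*N := mul_pos (by linarith only [hvib]) hN
            linarith only [hKE, hE, hP1, hP2, hP3, hP4, hP5, hP6, hP7, hP8, hP9, hP10, hA, hA2, hA3, hA4, hA5]
        · -- Sa case
          have hXeq : Sa t0 = -E := le_antisymm hcase hSat0
          refine case_helper ht0pos (hSa' t0 ht0pos) hXeq hEdef ?_ ?_
          · intro s h1 h2
            have ha := hlt s h1.le h2
            have hb' := hFmSa s
            linarith only [ha, hb']
          · rw [hXeq]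
            have hA : sigmas * beta * I t0 * -E / N ≤ sigmas*beta*B*E/N := by
              have hnum : sigmas * beta * I t0 * -E ≤ sigmas*beta*B*E := by
                nlinarith only [mul_le_mul_of_nonneg_left hIlo
                  (mul_nonneg (mul_nonneg hsigmas0.le hbeta.le) hE.le)]
              gcongr
            have hA2 : -(eta*B*E) ≤ eta * M (t0 - tau) * Sn t0 := by
              nlinarith only [mul_le_mul_of_nonneg_left
                (prod_ge_aux hMdel hSnt0 hMdhi hSnhi hB0.le hE.le) heta.le]
            have hA3 : 0 ≤ (lam + vs + b)*E := mul_nonneg (by linarith only [hlam, hvs, hb]) hE.le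
            have hA4 : -(delta*E) ≤ delta * p * R t0 := by
              nlinarith only [mul_le_mul_of_nonneg_left hRt0 (mul_nonneg hdelta.le hp0),
                mul_le_mul_of_nonneg_right hp1 (mul_nonneg hdelta.le hE.le)]
            linarith only [hKE, hE, hP1, hP2, hP3, hP4, hP5, hP6, hP7, hP8, hP9, hP10, hA, hA2, hA3, hA4]
      · rcases min_le_iff.1 h34 with hcase | hcase
        · -- I case
          have hXeq : I t0 = -E := le_antisymm hcase hIt0
          refine case_helper ht0pos (hI' t0 ht0pos) hXeq hEdef ?_ ?_
          · intro s h1 h2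
            have ha := hlt s h1.le h2
            have hb' := hFmI s
            linarith only [ha, hb']
          · rw [hXeq]
            have hA : -(beta*B*E/N) ≤ beta * -E * Sn t0 / N := by
              have hnum : -(beta*B*E) ≤ beta * -E * Sn t0 := by
                nlinarith only [mul_le_mul_of_nonneg_left hSnhi (mul_nonneg hbeta.le hE.le)]
              rw [← neg_div]
              gcongr
            have hA2 : -(sigmas*beta*B*E/N) ≤ sigmas * beta * -E * Sa t0 / N := by
              have hnum : -(sigmas*beta*B*E) ≤ sigmas * beta * -E * Sa t0 := by
                nlinarith only [mul_le_mul_of_nonneg_left hSahi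
                  (mul_nonneg (mul_nonneg hsigmas0.le hbeta.le) hE.le)]
              rw [← neg_div]
              gcongr
            have hA3 : 0 ≤ (r + b)*E := mul_nonneg (by linarith only [hr, hb]) hE.le
            linarith only [hKE, hE, hP1, hP2, hP3, hP4, hP5, hP6, hP7, hP8, hP9, hP10, hA, hA2, hA3, homegao]
        · -- R case
          have hXeq : R t0 = -E := le_antisymm hcase hRt0
          refine case_helper ht0pos (hR' t0 ht0pos) hXeq hEdef ?_ ?_
          · intro s h1 h2
            have ha := hlt s h1.le h2
            have hb' := hFmR s
            linarith only [ha, hb']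
          · rw [hXeq]
            have hA : -(r*E) ≤ r * I t0 := by
              nlinarith only [mul_le_mul_of_nonneg_left hIt0 hr.le]
            have hA2 : 0 < vi*N := mul_pos hvi0 hN
            have hA3 : -(vs*E) ≤ vs * Sa t0 := by
              nlinarith only [mul_le_mul_of_nonneg_left hSat0 hvs.le]
            have hA4 : 0 ≤ (delta + b)*E := mul_nonneg (by linarith only [hdelta, hb]) hE.le
            linarith only [hKE, hE, hP1, hP2, hP3, hP4, hP5, hP6, hP7, hP8, hP9, hP10, hA, hA2, hA3, hA4]
    · -- M case
      have hXeq : M t0 = -E := le_antisymm hcase hMt0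
      refine case_helper ht0pos (hM' t0 ht0pos) hXeq hEdef ?_ ?_
      · intro s h1 h2
        have ha := hlt s h1.le h2
        have hb' := hFmM s
        linarith only [ha, hb']
      · rw [hXeq]
        have hA : -(alphao*E) ≤ alphao * I t0 := by
          nlinarith only [mul_le_mul_of_nonneg_left hIt0 halphao.le]
        have hA2 : -(alpha*E/N) ≤ alpha * Sa t0 / N := by
          have hnum : -(alpha*E) ≤ alpha * Sa t0 := by
            nlinarith only [mul_le_mul_of_nonneg_left hSat0 halpha.le]
          rw [← neg_div]
          gcongr
        have hA3 : 0 ≤ lamo*E := mul_nonneg hlamo.le hE.le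
        linarith only [hKE, hE, hP1, hP2, hP3, hP4, hP5, hP6, hP7, hP8, hP9, hP10, hA, hA2, hA3, homegao]
  -- nonnegativity
  have hnn : ∀ s, 0 ≤ s → s ≤ t → 0 ≤ Sn s ∧ 0 ≤ Sa s ∧ 0 ≤ I s ∧ 0 ≤ R s ∧ 0 ≤ M s := by
    have hvar : ∀ (X : ℝ → ℝ), (∀ s, Fm s ≤ X s) → ∀ s, 0 ≤ s → s ≤ t → 0 ≤ X s := by
      intro X hFle s h1 h2
      by_contra h
      push_neg at h
      have hε : 0 < -X s / Real.exp (K * s) := div_pos (by linarith only [h]) (Real.exp_pos _)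
      have hk := key (-X s / Real.exp (K * s)) hε s h1 h2
      rw [div_mul_cancel₀ _ (Real.exp_pos (K * s)).ne'] at hk
      have h3 := hFle s
      linarith only [hk, h3]
    exact fun s h1 h2 => ⟨hvar Sn hFmSn s h1 h2, hvar Sa hFmSa s h1 h2,
      hvar I hFmI s h1 h2, hvar R hFmR s h1 h2, hvar M hFmM s h1 h2⟩
  -- conservation of total population
  have hsumN : ∀ s, 0 ≤ s → Sn s + Sa s + I s + R s = N := by
    intro s hs
    have hφd : ∀ u, 0 < u →
        HasDerivAt (fun z => (Sn z + Sa z + I z + R z - N) * Real.exp (b*z)) 0 u := by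
      intro u hu
      have h := (((((hSn' u hu).add (hSa' u hu)).add (hI' u hu)).add
        (hR' u hu)).sub_const N).mul (hexpD b u)
      refine h.congr_deriv ?_
      simp only [Pi.add_apply]
      rw [hq]; ring
    have hφc : ContinuousOn (fun z => (Sn z + Sa z + I z + R z - N) * Real.exp (b*z))
        (Icc 0 s) := by
      apply ContinuousOn.mul
      · exact ((((hSnC.mono Icc_subset_Ici_self).add (hSaC.mono Icc_subset_Ici_self)).add
          (hIC.mono Icc_subset_Ici_self)).add (hRC.mono Icc_subset_Ici_self)).sub
          continuousOn_const
      · exact Continuous.continuousOn (hcexp b)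
    have h1 := le_init_of_deriv_nonpos hs hφc (fun u hu1 _ => ⟨0, hφd u hu1, le_rfl⟩)
    have h2 := le_init_of_deriv_nonpos hs hφc.neg
      (fun u hu1 _ => ⟨0, by simpa using (hφd u hu1).neg, le_rfl⟩)
    have h1' : (Sn s + Sa s + I s + R s - N) * Real.exp (b*s)
        ≤ (Sn 0 + Sa 0 + I 0 + R 0 - N) * Real.exp (b*0) := h1
    have h2' : -((Sn s + Sa s + I s + R s - N) * Real.exp (b*s))
        ≤ -((Sn 0 + Sa 0 + I 0 + R 0 - N) * Real.exp (b*0)) := h2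
    have hz : (Sn 0 + Sa 0 + I 0 + R 0 - N) * Real.exp (b*0) = 0 := by
      rw [hsum]; ring
    have hφs : (Sn s + Sa s + I s + R s - N) * Real.exp (b*s) = 0 := by
      linarith only [h1', h2', hz]
    rcases mul_eq_zero.1 hφs with h | h
    · linarith only [h]
    · exact absurd h (Real.exp_pos (b*s)).ne'
  -- upper bound on M
  obtain ⟨U, hUdef⟩ : ∃ x : ℝ, x = M 0 + (omegao + alphao * N + alpha) / lamo := ⟨_, rfl⟩
  have hUeq : lamo * U = lamo * M 0 + (omegao + alphao*N + alpha) := by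
    rw [hUdef, mul_add, mul_div_cancel₀ _ hlamo.ne']
  have hψd : ∀ u, 0 < u → u < t →
      ∃ d, HasDerivAt (fun z => (M z - U) * Real.exp (lamo*z)) d u ∧ d ≤ 0 := by
    intro u hu1 hu2
    refine ⟨_, ((hM' u hu1).sub_const U).mul (hexpD lamo u), ?_⟩
    obtain ⟨hn1, hn2, hn3, hn4, hn5⟩ := hnn u hu1.le hu2.le
    have hsu := hsumN u hu1.le
    have hIu : I u ≤ N := by linarith only [hn1, hn2, hn4, hsu]
    have hSau : Sa u ≤ N := by linarith only [hn1, hn3, hn4, hsu]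
    have hdivSa : alpha * Sa u / N ≤ alpha := by
      rw [div_le_iff₀ hN]; nlinarith only [mul_le_mul_of_nonneg_left hSau halpha.le]
    have halphaoIu : alphao * I u ≤ alphao * N := mul_le_mul_of_nonneg_left hIu halphao.le
    have hlM0 : 0 ≤ lamo * M 0 := mul_nonneg hlamo.le hM00
    have hstuff : omegao + alphao * I u + alpha * Sa u / N - lamo * U ≤ 0 := by
      linarith only [hUeq, hlM0, halphaoIu, hdivSa]
    have heq : (omegao + alphao * I u + alpha * Sa u / N - lamo * M u) * Real.exp (lamo*u)
        + (M u - U) * (lamo * Real.exp (lamo*u))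
        = (omegao + alphao * I u + alpha * Sa u / N - lamo * U) * Real.exp (lamo*u) := by
      ring
    rw [heq]
    have := mul_le_mul_of_nonneg_right hstuff (Real.exp_pos (lamo*u)).le
    simpa using this
  have hψc : ContinuousOn (fun z => (M z - U) * Real.exp (lamo*z)) (Icc 0 t) :=
    ((hMC.mono hIccIci).sub continuousOn_const).mul (Continuous.continuousOn (hcexp lamo))
  have h5 := le_init_of_deriv_nonpos ht hψc hψd
  have h5' : (M t - U) * Real.exp (lamo*t) ≤ (M 0 - U) * Real.exp (lamo*0) := h5
  have h6 : M 0 - U ≤ 0 := by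
    rw [hUdef]
    have : 0 ≤ (omegao + alphao*N + alpha)/lamo := by
      apply div_nonneg _ hlamo.le
      nlinarith only [mul_nonneg halphao.le hN.le, homegao, halpha]
    linarith only [this]
  have h7 : (M t - U) * Real.exp (lamo*t) ≤ 0 := by
    rw [mul_zero, Real.exp_zero, mul_one] at h5'
    linarith only [h5', h6]
  have hMle : M t ≤ U := by nlinarith only [Real.exp_pos (lamo*t), h7]
  obtain ⟨g1, g2, g3, g4, g5⟩ := hnn t ht le_rfl
  have hsumt := hsumN t ht
  rw [hUdef] at hMle
  exact ⟨⟨g1, by linarith only [g2, g3, g4, hsumt]⟩, ⟨g2, by linarith only [g1, g3, g4, hsumt]⟩,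
    ⟨g3, by linarith only [g1, g2, g4, hsumt]⟩, ⟨g4, by linarith only [g1, g2, g3, hsumt]⟩,
    ⟨g5, hMle⟩⟩
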